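/- arXiv:1308.0856 — 3 statements merged into one kernel-verified Lean document; each statement's English description precedes it below -/
import Mathlib

section
/- Let G be a group and H a subgroup. The H-fixed point functor (−)^H : Set^G → Set preserves pushouts of spans X ← A → Y of G-sets in which the map A → X is injective. -/
open CategoryTheory CategoryTheory.Limits

/-- The `H`-fixed point functor `Set^G → Set` on `G`-sets. -/
def fixedPointsFunctor (G : Type) [Group G] (H : Subgroup G) :
    Action (Type) (MonCat.of G) ⥤ Type where
  obj X := { x : X.V // ∀ h ∈ H, X.ρ h x = x }
  map {X Y} f := TypeCat.ofHom fun x => ⟨f.hom x.1, fun h hh => by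
    have := congrArg (fun k => k x.1) (f.comm h)
    simp only [types_comp_apply] at this
    rw [← this, x.2 h hh]⟩

namespace Stmt6Aux

variable {G : Type} [Group G]
variable {A X Y : Action (Type) (MonCat.of G)} (f : A ⟶ X) (g : A ⟶ Y)

/-- the generating relation for the pushout -/
def prel : X.V ⊕ Y.V → X.V ⊕ Y.V → Prop :=
  fun p q => ∃ a, p = Sum.inl (f.hom a) ∧ q = Sum.inr (g.hom a)

/-- the equivalence closure of `prel`, assuming `f.hom` injective -/
def R : X.V ⊕ Y.V → X.V ⊕ Y.V → Prop
  | Sum.inl x, Sum.inl x' =>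
      x = x' ∨ ∃ a a', f.hom a = x ∧ f.hom a' = x' ∧ g.hom a = g.hom a'
  | Sum.inl x, Sum.inr y => ∃ a, f.hom a = x ∧ g.hom a = y
  | Sum.inr y, Sum.inl x => ∃ a, f.hom a = x ∧ g.hom a = y
  | Sum.inr y, Sum.inr y' => y = y'

theorem R_refl (p : X.V ⊕ Y.V) : R f g p p := by
  cases p with
  | inl x => exact Or.inl rfl
  | inr y => exact rfl

theorem R_symm {p q : X.V ⊕ Y.V} (h : R f g p q) : R f g q p := by
  cases p <;> cases q <;> simp only [R] at *
  · rcases h with h | ⟨a, a', h1, h2, h3⟩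
    · exact Or.inl h.symm
    · exact Or.inr ⟨a', a, h2, h1, h3.symm⟩
  · exact h
  · exact h
  · exact h.symm

theorem R_trans (hinj : Function.Injective f.hom) {p q r : X.V ⊕ Y.V}
    (h1 : R f g p q) (h2 : R f g q r) : R f g p r := by
  cases p with
  | inl x =>
    cases q with
    | inl x' =>
      cases r with
      | inl x'' =>
        rcases h1 with h1 | ⟨a, a', ha, ha', hg⟩
        · subst h1; exact h2
        · rcases h2 with h2 | ⟨b, b', hb, hb', hg'⟩
          · subst h2; exact Or.inr ⟨a, a', ha, ha', hg⟩
          · have : a' = b := hinj (ha'.trans hb.symm)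
            subst this
            exact Or.inr ⟨a, b', ha, hb', hg.trans hg'⟩
      | inr y'' =>
        rcases h1 with h1 | ⟨a, a', ha, ha', hg⟩
        · subst h1; exact h2
        · rcases h2 with ⟨b, hb, hb'⟩
          have : a' = b := hinj (ha'.trans hb.symm)
          subst this
          exact ⟨a, ha, hg.trans hb'⟩
    | inr y' =>
      cases r with
      | inl x'' =>
        rcases h1 with ⟨a, ha, ha'⟩
        rcases h2 with ⟨b, hb, hb'⟩
        exact Or.inr ⟨a, b, ha, hb, ha'.trans hb'.symm⟩
      | inr y'' =>
        rcases h1 with ⟨a, ha, ha'⟩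
        subst h2
        exact ⟨a, ha, ha'⟩
  | inr y =>
    cases q with
    | inl x' =>
      cases r with
      | inl x'' =>
        rcases h1 with ⟨a, ha, ha'⟩
        rcases h2 with h2 | ⟨b, b', hb, hb', hg⟩
        · subst h2; exact ⟨a, ha, ha'⟩
        · have : a = b := hinj (ha.trans hb.symm)
          subst this
          exact ⟨b', hb', (ha'.symm.trans hg).symm⟩
      | inr y'' =>
        rcases h1 with ⟨a, ha, ha'⟩
        rcases h2 with ⟨b, hb, hb'⟩
        have : a = b := hinj (ha.trans hb.symm)
        subst this
        exact ha'.symm.trans hb'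
    | inr y' =>
      subst h1; exact h2

theorem prel_sub {p q : X.V ⊕ Y.V} (h : prel f g p q) : R f g p q := by
  rcases h with ⟨a, rfl, rfl⟩
  exact ⟨a, rfl, rfl⟩

theorem R_sound {p q : X.V ⊕ Y.V} (h : R f g p q) :
    Quot.mk (prel f g) p = Quot.mk (prel f g) q := by
  cases p with
  | inl x =>
    cases q with
    | inl x' =>
      rcases h with h | ⟨a, a', rfl, rfl, hg⟩
      · rw [h]
      · have e1 : Quot.mk (prel f g) (Sum.inl (f.hom a)) =
            Quot.mk (prel f g) (Sum.inr (g.hom a)) := Quot.sound ⟨a, rfl, rfl⟩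
        have e2 : Quot.mk (prel f g) (Sum.inl (f.hom a')) =
            Quot.mk (prel f g) (Sum.inr (g.hom a')) := Quot.sound ⟨a', rfl, rfl⟩
        rw [e1, e2, hg]
    | inr y =>
      rcases h with ⟨a, rfl, rfl⟩
      exact Quot.sound ⟨a, rfl, rfl⟩
  | inr y =>
    cases q with
    | inl x =>
      rcases h with ⟨a, rfl, rfl⟩
      exact (Quot.sound ⟨a, rfl, rfl⟩).symm
    | inr y' =>
      rw [h]

theorem quot_eq_iff (hinj : Function.Injective f.hom) (p q : X.V ⊕ Y.V) :
    Quot.mk (prel f g) p = Quot.mk (prel f g) q ↔ R f g p q := by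
  constructor
  · intro h
    have h' := Quot.eqvGen_exact h
    clear h
    induction h' with
    | rel _ _ h => exact prel_sub f g h
    | refl _ => exact R_refl f g _
    | symm _ _ _ ih => exact R_symm f g ih
    | trans _ _ _ _ _ ih1 ih2 => exact R_trans f g hinj ih1 ih2
  · exact R_sound f g

/-- the action on the pushout -/
def Zmap (h : G) : X.V ⊕ Y.V → X.V ⊕ Y.V := Sum.map (X.ρ h) (Y.ρ h)

theorem Zmap_rel (h : G) {p q : X.V ⊕ Y.V} (hpq : prel f g p q) :
    Quot.mk (prel f g) (Zmap h p) = Quot.mk (prel f g) (Zmap h q) := by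
  rcases hpq with ⟨a, rfl, rfl⟩
  refine Quot.sound ⟨A.ρ h a, ?_, ?_⟩
  · simp [Zmap]
    exact (types_congr_hom (f.comm h) a).symm
  · simp [Zmap]
    exact (types_congr_hom (g.comm h) a).symm

/-- the pushout object in `Action Type (MonCat.of G)` -/
def Z : Action (Type) (MonCat.of G) where
  V := Quot (prel f g)
  ρ := {
    toFun := fun h => TypeCat.ofHom <| Quot.lift (fun p => Quot.mk _ (Zmap h p))
      (fun p q hpq => Zmap_rel f g h hpq)
    map_one' := by
      apply ConcreteCategory.hom_ext; apply Quot.ind; intro p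
      show Quot.mk _ (Zmap 1 p) = _
      cases p with
      | inl x =>
        show Quot.mk _ (Sum.inl (X.ρ 1 x)) = Quot.mk _ (Sum.inl x)
        rw [Action.ρ_one]; rfl
      | inr y =>
        show Quot.mk _ (Sum.inr (Y.ρ 1 y)) = Quot.mk _ (Sum.inr y)
        rw [Action.ρ_one]; rfl
    map_mul' := by
      intro h h'
      apply ConcreteCategory.hom_ext; apply Quot.ind; intro p
      cases p with
      | inl x =>
        show Quot.mk _ (Sum.inl (X.ρ (h * h') x)) = Quot.mk _ (Sum.inl (X.ρ h (X.ρ h' x)))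
        rw [map_mul]; rfl
      | inr y =>
        show Quot.mk _ (Sum.inr (Y.ρ (h * h') y)) = Quot.mk _ (Sum.inr (Y.ρ h (Y.ρ h' y)))
        rw [map_mul]; rfl }

/-- left inclusion -/
def zinl : X ⟶ Z f g where
  hom := TypeCat.ofHom fun x => Quot.mk _ (Sum.inl x)
  comm := fun _ => rfl

/-- right inclusion -/
def zinr : Y ⟶ Z f g where
  hom := TypeCat.ofHom fun y => Quot.mk _ (Sum.inr y)
  comm := fun _ => rfl

theorem zcond : f ≫ zinl f g = g ≫ zinr f g := by
  apply Action.Hom.ext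
  ext a
  exact Quot.sound ⟨a, rfl, rfl⟩

/-- the cocone is a colimit -/
def zIsColimit : IsColimit (PushoutCocone.mk (zinl f g) (zinr f g) (zcond f g)) := by
  refine PushoutCocone.IsColimit.mk _ (fun s => ?_) (fun s => ?_) (fun s => ?_) (fun s m hl hr => ?_)
  · refine ⟨TypeCat.ofHom <| Quot.lift (Sum.elim s.inl.hom s.inr.hom) ?_, ?_⟩
    · rintro p q ⟨a, rfl, rfl⟩
      exact types_congr_hom (congrArg Action.Hom.hom s.condition) a
    · intro h
      ext z
      induction z using Quot.ind with
      | _ p =>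
        cases p with
        | inl x => exact types_congr_hom (s.inl.comm h) x
        | inr y => exact types_congr_hom (s.inr.comm h) y
  · apply Action.Hom.ext; rfl
  · apply Action.Hom.ext; rfl
  · apply Action.Hom.ext
    ext z
    induction z using Quot.ind with
    | _ p =>
      cases p with
      | inl x => exact types_congr_hom (congrArg Action.Hom.hom hl) x
      | inr y => exact types_congr_hom (congrArg Action.Hom.hom hr) y

end Stmt6Aux

open Stmt6Aux in
/-- The `H`-fixed point functor `Set^G → Set` preserves pushouts of spans
`X ← A → Y` of `G`-sets in which `A → X` is injective. -/
theorem stmt6 (G : Type) [Group G] (H : Subgroup G)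
    (A X Y : Action (Type) (MonCat.of G)) (f : A ⟶ X) (g : A ⟶ Y)
    (hinj : Function.Injective f.hom) :
    Nonempty (PreservesColimit (span f g) (fixedPointsFunctor G H)) := by
  classical
  constructor
  apply preservesColimit_of_preserves_colimit_cocone (zIsColimit f g)
  set F := fixedPointsFunctor G H with hF
  refine (isColimitMapCoconePushoutCoconeEquiv F (zcond f g)).symm ?_
  set i := F.map (zinl f g) with hi
  set j := F.map (zinr f g) with hj
  -- basic facts
  have hρ : ∀ (h : G) (p : X.V ⊕ Y.V),
      (Z f g).ρ h (Quot.mk (prel f g) p) = Quot.mk (prel f g) (Zmap h p) := fun _ _ => rfl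
  have key : ∀ (z : F.obj (Z f g)), (∃ x : F.obj X, i x = z) ∨ (∃ y : F.obj Y, j y = z) := by
    rintro ⟨z0, hz⟩
    induction z0 using Quot.ind with
    | _ p =>
      cases p with
      | inl x =>
        by_cases hx : ∃ a, f.hom a = x
        · right
          obtain ⟨a, rfl⟩ := hx
          have e : Quot.mk (prel f g) (Sum.inl (f.hom a)) =
              Quot.mk (prel f g) (Sum.inr (g.hom a)) := Quot.sound ⟨a, rfl, rfl⟩
          have hy : ∀ h ∈ H, Y.ρ h (g.hom a) = g.hom a := by
            intro h hh
            have := hz h hh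
            rw [hρ] at this
            have e2 : Quot.mk (prel f g) (Sum.inr (Y.ρ h (g.hom a))) =
                Quot.mk (prel f g) (Sum.inr (g.hom a)) := by
              have e3 : Quot.mk (prel f g) (Sum.inl (X.ρ h (f.hom a))) =
                  Quot.mk (prel f g) (Sum.inr (Y.ρ h (g.hom a))) := by
                refine Quot.sound ⟨A.ρ h a, ?_, ?_⟩
                · exact congrArg Sum.inl (types_congr_hom (f.comm h) a).symm
                · exact congrArg Sum.inr (types_congr_hom (g.comm h) a).symm
              rw [← e3]
              exact this.trans e
            exact (quot_eq_iff f g hinj _ _).mp e2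
          exact ⟨⟨g.hom a, hy⟩, Subtype.ext e.symm⟩
        · left
          have hfix : ∀ h ∈ H, X.ρ h x = x := by
            intro h hh
            have := hz h hh
            rw [hρ] at this
            have := (quot_eq_iff f g hinj _ _).mp this
            rcases this with h' | ⟨a, a', _, ha', _⟩
            · exact h'
            · exact absurd ⟨a', ha'⟩ hx
          exact ⟨⟨x, hfix⟩, rfl⟩
      | inr y =>
        right
        have hfix : ∀ h ∈ H, Y.ρ h y = y := by
          intro h hh
          have := hz h hh
          rw [hρ] at this
          exact (quot_eq_iff f g hinj _ _).mp this
        exact ⟨⟨y, hfix⟩, rfl⟩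
  have fixa : ∀ (a : A.V), (∀ h ∈ H, X.ρ h (f.hom a) = f.hom a) → ∀ h ∈ H, A.ρ h a = a := by
    intro a ha h hh
    apply hinj
    have : f.hom (A.ρ h a) = X.ρ h (f.hom a) := types_congr_hom (f.comm h) a
    rw [this, ha h hh]
  have glue : ∀ (x : F.obj X) (y : F.obj Y), i x = j y →
      ∃ a : F.obj A, F.map f a = x ∧ F.map g a = y := by
    rintro ⟨x, hx⟩ ⟨y, hy⟩ hxy
    have := (quot_eq_iff f g hinj _ _).mp (Subtype.ext_iff.mp hxy)
    obtain ⟨a, ha, ha'⟩ := this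
    have haf : ∀ h ∈ H, A.ρ h a = a := fixa a (by rw [ha]; exact hx)
    exact ⟨⟨a, haf⟩, Subtype.ext ha, Subtype.ext ha'⟩
  have injY : ∀ (y y' : F.obj Y), j y = j y' → y = y' := by
    rintro ⟨y, hy⟩ ⟨y', hy'⟩ hyy
    have := (quot_eq_iff f g hinj _ _).mp (Subtype.ext_iff.mp hyy)
    exact Subtype.ext this
  have iglue : ∀ (x x' : F.obj X), i x = i x' → x = x' ∨
      ∃ (a a' : F.obj A), F.map f a = x ∧ F.map f a' = x' ∧ F.map g a = F.map g a' := by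
    rintro ⟨x, hx⟩ ⟨x', hx'⟩ hxx
    have := (quot_eq_iff f g hinj _ _).mp (Subtype.ext_iff.mp hxx)
    rcases this with h' | ⟨a, a', ha, ha', hg⟩
    · exact Or.inl (Subtype.ext h')
    · refine Or.inr ⟨⟨a, fixa a (by rw [ha]; exact hx)⟩, ⟨a', fixa a' (by rw [ha']; exact hx')⟩,
        Subtype.ext ha, Subtype.ext ha', Subtype.ext hg⟩
  refine PushoutCocone.IsColimit.mk _ (fun s => ?_) (fun s => ?_) (fun s => ?_)
    (fun s m hl hr => ?_)
  case _ =>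
    refine TypeCat.ofHom fun z => ?_
    exact if hx : ∃ x, i x = z then s.inl hx.choose
      else s.inr ((key z).resolve_left hx).choose
  all_goals {
    have slEq : ∀ (x x' : F.obj X), i x = i x' → s.inl x = s.inl x' := by
      intro x x' hxx
      rcases iglue x x' hxx with rfl | ⟨a, a', ha, ha', hg⟩
      · rfl
      · have c1 := types_congr_hom s.condition a
        have c2 := types_congr_hom s.condition a'
        simp only [types_comp_apply] at c1 c2
        rw [← ha, ← ha', c1, c2, hg]
    have slsrEq : ∀ (x : F.obj X) (y : F.obj Y), i x = j y → s.inl x = s.inr y := by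
      intro x y hxy
      obtain ⟨a, ha, ha'⟩ := glue x y hxy
      have c1 := types_congr_hom s.condition a
      simp only [types_comp_apply] at c1
      rw [← ha, ← ha', c1]
    have facl : ∀ x : F.obj X,
        (if hx : ∃ x', i x' = i x then s.inl hx.choose
          else s.inr ((key (i x)).resolve_left hx).choose) = s.inl x := by
      intro x
      have hx : ∃ x', i x' = i x := ⟨x, rfl⟩
      rw [dif_pos hx]
      exact slEq _ _ hx.choose_spec
    have facr : ∀ y : F.obj Y,
        (if hx : ∃ x', i x' = j y then s.inl hx.choose
          else s.inr ((key (j y)).resolve_left hx).choose) = s.inr y := by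
      intro y
      by_cases hx : ∃ x', i x' = j y
      · rw [dif_pos hx]
        exact slsrEq _ _ hx.choose_spec
      · rw [dif_neg hx]
        exact congrArg s.inr (injY _ _ ((key (j y)).resolve_left hx).choose_spec)
    first
    | · ext x
        exact facl x
    | · ext y
        exact facr y
    | · ext z
        simp only [TypeCat.Fun.toFun_apply, TypeCat.ofHom_apply]
        rcases key z with ⟨x, rfl⟩ | ⟨y, rfl⟩
        · rw [facl x]
          exact types_congr_hom hl x
        · rw [facr y]
          exact types_congr_hom hr y
  }
end

section
/- Let G be a group and H a subgroup. For any group A, the canonical map from the free product (coproduct in Groups) ∐_{(G/K)^H} A to the H-fixed subgroup of ∐_{G/K} A (with G permuting the free factors via its action on G/K) is an isomorphism. -/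
variable (A : Type*) [Group A] (G : Type*) [Group G] (H K : Subgroup G)

/-- The action of `g : G` on the free product `∐_{G/K} A`, permuting the free factors
via left translation on `G/K`. -/
def permHom (g : G) :
    Monoid.CoprodI (fun (_ : G ⧸ K) => A) →* Monoid.CoprodI (fun (_ : G ⧸ K) => A) :=
  Monoid.CoprodI.lift fun c => Monoid.CoprodI.of (M := fun (_ : G ⧸ K) => A) (i := g • c)

/-- The `H`-fixed subgroup of the free product `∐_{G/K} A`. -/
def fixedSubgroup : Subgroup (Monoid.CoprodI (fun (_ : G ⧸ K) => A)) where
  carrier := { x | ∀ h : H, permHom A G K (h : G) x = x }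
  mul_mem' := fun ha hb h => by rw [map_mul, ha h, hb h]
  one_mem' := fun h => map_one _
  inv_mem' := fun ha h => by rw [map_inv, ha h]

/-- The canonical homomorphism `∐_{(G/K)^H} A → (∐_{G/K} A)^H`. -/
def toFixed :
    Monoid.CoprodI (fun (_ : MulAction.fixedPoints H (G ⧸ K)) => A) →*
      fixedSubgroup A G H K :=
  Monoid.CoprodI.lift fun c =>
    MonoidHom.codRestrict
      (Monoid.CoprodI.of (M := fun (_ : G ⧸ K) => A) (i := (c : G ⧸ K)))
      (fixedSubgroup A G H K) (fun a h => by
      show permHom A G K (h : G)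
          (Monoid.CoprodI.of (M := fun (_ : G ⧸ K) => A) (i := (c : G ⧸ K)) a) =
        Monoid.CoprodI.of (M := fun (_ : G ⧸ K) => A) (i := (c : G ⧸ K)) a
      rw [permHom, Monoid.CoprodI.lift_of]
      have hc : (h : G) • (c : G ⧸ K) = (c : G ⧸ K) := c.2 h
      rw [hc])


open Monoid Monoid.CoprodI in
/-- Relabel the letters of a reduced word by the `g`-action on indices. -/
def mapWord (g : G) (w : Word (fun (_ : G ⧸ K) => A)) : Word (fun (_ : G ⧸ K) => A) where
  toList := w.toList.map fun l => ⟨g • l.1, l.2⟩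
  ne_one := by
    intro l hl
    rcases List.mem_map.1 hl with ⟨l', hl', rfl⟩
    exact w.ne_one l' hl'
  chain_ne := by
    refine List.isChain_map_of_isChain _ ?_ w.chain_ne
    intro a b hab h
    exact hab (smul_left_cancel g h)

open Monoid Monoid.CoprodI in
theorem permHom_prod (g : G) (w : Word (fun (_ : G ⧸ K) => A)) :
    permHom A G K g w.prod = (mapWord A G K g w).prod := by
  simp only [Word.prod, mapWord, map_list_prod, List.map_map, Function.comp_def, permHom,
    Monoid.CoprodI.lift_of]

private theorem list_map_eq_self {α : Type*} {f : α → α} :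
    ∀ {l : List α}, l.map f = l → ∀ a ∈ l, f a = a := by
  intro l
  induction l with
  | nil => simp
  | cons a t ih =>
    intro h b hb
    simp only [List.map_cons, List.cons.injEq] at h
    rw [List.mem_cons] at hb
    rcases hb with rfl | hb
    · exact h.1
    · exact ih h.2 b hb

open Monoid Monoid.CoprodI in
open scoped Classical in
/-- A retraction of `toFixed` (after composing with the subgroup inclusion). -/
noncomputable def retr :
    Monoid.CoprodI (fun (_ : G ⧸ K) => A) →*
      Monoid.CoprodI (fun (_ : MulAction.fixedPoints H (G ⧸ K)) => A) :=
  Monoid.CoprodI.lift fun c =>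
    if h : c ∈ MulAction.fixedPoints H (G ⧸ K) then
      Monoid.CoprodI.of (M := fun (_ : MulAction.fixedPoints H (G ⧸ K)) => A) (i := ⟨c, h⟩)
    else 1

theorem retr_toFixed (x : Monoid.CoprodI (fun (_ : MulAction.fixedPoints H (G ⧸ K)) => A)) :
    retr A G H K ((toFixed A G H K x) : Monoid.CoprodI (fun (_ : G ⧸ K) => A)) = x := by
  have : (retr A G H K).comp (((fixedSubgroup A G H K).subtype).comp (toFixed A G H K)) =
      MonoidHom.id _ := by
    apply Monoid.CoprodI.ext_hom
    intro c
    ext a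
    simp only [MonoidHom.comp_apply, MonoidHom.id_apply, toFixed, Monoid.CoprodI.lift_of]
    show retr A G H K (Monoid.CoprodI.of (M := fun (_ : G ⧸ K) => A) (i := (c : G ⧸ K)) a) = _
    rw [retr, Monoid.CoprodI.lift_of, dif_pos c.2]
  exact DFunLike.congr_fun this x

/-- The canonical map `∐_{(G/K)^H} A → (∐_{G/K} A)^H` is an isomorphism. -/
theorem stmt10 : Function.Bijective (toFixed A G H K) := by
  classical
  constructor
  · intro x y hxy
    have := congrArg (fun z => retr A G H K ((z : fixedSubgroup A G H K) :
      Monoid.CoprodI (fun (_ : G ⧸ K) => A))) hxy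
    simpa only [retr_toFixed] using this
  · rintro ⟨x, hx⟩
    set w := Monoid.CoprodI.Word.equiv x with hw
    have hprod : w.prod = x := (Monoid.CoprodI.Word.equiv).left_inv x
    have hfix : ∀ l ∈ w.toList, (l.1 : G ⧸ K) ∈ MulAction.fixedPoints H (G ⧸ K) := by
      intro l hl h
      have h1 : (mapWord A G K (h : G) w).prod = w.prod := by
        rw [← permHom_prod, hprod, hx h]
      have h2 : mapWord A G K (h : G) w = w :=
        (Monoid.CoprodI.Word.equiv).symm.injective h1
      have h3 := congrArg Monoid.CoprodI.Word.toList h2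
      have := list_map_eq_self h3 l hl
      exact congrArg Sigma.fst this
    refine ⟨(w.toList.attach.map fun l =>
      Monoid.CoprodI.of (M := fun (_ : MulAction.fixedPoints H (G ⧸ K)) => A)
        (i := ⟨l.1.1, hfix l.1 l.2⟩) l.1.2).prod, ?_⟩
    apply Subtype.ext
    show ((fixedSubgroup A G H K).subtype.comp (toFixed A G H K)) _ = x
    rw [← hprod, map_list_prod, List.map_map]
    have : ((fixedSubgroup A G H K).subtype).comp (toFixed A G H K) ∘
        (fun l : {l // l ∈ w.toList} =>
          Monoid.CoprodI.of (M := fun (_ : MulAction.fixedPoints H (G ⧸ K)) => A)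
            (i := ⟨l.1.1, hfix l.1 l.2⟩) l.1.2) =
        fun l => Monoid.CoprodI.of (M := fun (_ : G ⧸ K) => A) (i := l.1.1) l.1.2 := by
      funext l
      simp only [Function.comp_apply, MonoidHom.comp_apply, toFixed, Monoid.CoprodI.lift_of]
      rfl
    rw [this, Monoid.CoprodI.Word.prod,
      ← List.attach_map_val (l := w.toList)
        (f := fun l => Monoid.CoprodI.of (M := fun (_ : G ⧸ K) => A) (i := l.1) l.2)]
end

section
/- Let G be a group, F a set of subgroups of G containing the trivial subgroup, and C a complete and cocomplete category. Let i : G → O_F^op be the functor sending the unique object to G/{e} and a group element g to the G-map G/{e} → G/{e}, h ↦ hg. Then the precomposition functor i* : C^{O_F^op} → C^G has a right adjoint i_* given by i_*X(G/H) = X^H, and this right adjoint is fully faithful (equivalently, the counit i* i_* → Id is a natural isomorphism). -/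
open CategoryTheory CategoryTheory.Limits

universe u v

variable (G : Type u) [Group G] (F : Set (Subgroup G))

/-- The orbit category `O_F`: objects are the subgroups `H ∈ F` (standing for the coset
`G`-sets `G/H`), morphisms `G/H → G/K` are the `G`-equivariant maps. -/
structure OrbitCat where
  H : Subgroup G
  mem : H ∈ F

instance : Category.{u} (OrbitCat G F) where
  Hom H K := G ⧸ H.H →[G] G ⧸ K.H
  id H := MulActionHom.id G
  comp f g := g.comp f
  id_comp f := rfl
  comp_id f := rfl
  assoc f g h := rfl

variable (C : Type v) [Category.{u} C] [HasLimits C] [HasColimits C]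

/-- The `H`-fixed point functor `C^G → C`. -/
noncomputable def fixPt (H : Subgroup G) : (SingleObj G ⥤ C) ⥤ C :=
  haveI : HasLimitsOfSize.{u, 0} C := hasLimitsOfSizeShrink.{u, 0, 0, u} C
  (Functor.whiskeringLeft (SingleObj ↥H) (SingleObj G) C).obj
    ((SingleObj.mapHom ↥H G) H.subtype) ⋙ Limits.lim

variable (hF : ⊥ ∈ F)

/-- Right multiplication by `g` as a `G`-map `G/{e} → G/{e}`. -/
def orbRightMul (g : G) : G ⧸ (⊥ : Subgroup G) →[G] G ⧸ (⊥ : Subgroup G) where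
  toFun c := c * ((g : G) : G ⧸ (⊥ : Subgroup G))
  map_smul' m x := by
    induction x using QuotientGroup.induction_on with
    | H z => show (((m * z) * g : G) : G ⧸ (⊥ : Subgroup G)) = ((m * (z * g) : G) : _)
             rw [mul_assoc]

/-- The functor `i : G → O_F^op` sending the unique object to `G/{e}` and `g : G` to the
`G`-map `G/{e} → G/{e}`, `h ↦ hg`. -/
def iFunctor : SingleObj G ⥤ (OrbitCat G F)ᵒᵖ where
  obj _ := Opposite.op ⟨⊥, hF⟩
  map {_ _} (g : G) := Quiver.Hom.op
    (show ((⟨⊥, hF⟩ : OrbitCat G F) ⟶ ⟨⊥, hF⟩) from orbRightMul G g)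
  map_id _ := by
    apply congrArg Quiver.Hom.op
    apply MulActionHom.ext
    intro x
    induction x using QuotientGroup.induction_on with
    | H z => show ((z * 1 : G) : G ⧸ (⊥ : Subgroup G)) = _
             rw [mul_one]
             rfl
  map_comp {_ _ _} f h := by
    apply congrArg Quiver.Hom.op
    apply MulActionHom.ext
    intro x
    induction x using QuotientGroup.induction_on with
    | H z => show ((z * (h * f) : G) : G ⧸ (⊥ : Subgroup G)) = ((z * h * f : G) : _)
             rw [mul_assoc]

-- bot quotient mk injective
lemma botmk_inj : Function.Injective (QuotientGroup.mk : G → G ⧸ (⊥ : Subgroup G)) := by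
  intro a b h
  have := QuotientGroup.eq.mp h
  simpa [Subgroup.mem_bot, inv_mul_eq_one] using this

instance : (iFunctor G F hF).Faithful where
  map_injective := by
    intro X Y (g : G) (g' : G) h
    have h2 : orbRightMul G g = orbRightMul G g' := congrArg Quiver.Hom.unop h
    have h3 : ((1*g : G) : G ⧸ (⊥:Subgroup G)) = ((1*g' : G) : _) :=
      DFunLike.congr_fun h2 ((1:G) : G ⧸ (⊥:Subgroup G))
    have := h3
    simpa using botmk_inj G (by simpa using this)

instance : (iFunctor G F hF).Full where
  map_surjective := by
    intro X Y f
    let φ : (G ⧸ (⊥:Subgroup G)) →[G] G ⧸ (⊥:Subgroup G) := f.unop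
    obtain ⟨a, ha⟩ := QuotientGroup.mk_surjective (φ ((1:G) : G ⧸ (⊥ : Subgroup G)))
    refine ⟨a, ?_⟩
    apply Quiver.Hom.unop_inj
    show orbRightMul G a = φ
    apply MulActionHom.ext
    intro x
    induction x using QuotientGroup.induction_on with
    | H z =>
      have h1 : φ ((z:G) : G ⧸ (⊥:Subgroup G)) = z • φ ((1:G) : G ⧸ (⊥:Subgroup G)) := by
        have := φ.map_smul z ((1:G) : G ⧸ (⊥:Subgroup G))
        have h0 : (z • ((1:G) : G ⧸ (⊥:Subgroup G))) = ((z:G) : G ⧸ (⊥:Subgroup G)) := by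
          show (((z*1 : G)) : G ⧸ (⊥:Subgroup G)) = _
          rw [mul_one]
        rw [h0] at this
        exact this
      show ((z * a : G) : G ⧸ (⊥ : Subgroup G)) = φ ((z:G) : G ⧸ (⊥:Subgroup G))
      rw [h1, ← ha]
      rfl

/-- canonical projection G/⊥ → G/H as a G-map -/
def proj0 (H : Subgroup G) : G ⧸ (⊥ : Subgroup G) →[G] G ⧸ H where
  toFun := Quotient.lift (fun g => ((g : G) : G ⧸ H)) (by
    intro a b h
    have : a = b := by
      have := QuotientGroup.leftRel_apply.mp h
      simpa [Subgroup.mem_bot, inv_mul_eq_one] using this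
    rw [this])
  map_smul' m x := by
    induction x using QuotientGroup.induction_on with
    | H z => rfl

variable {G F} in
/-- the functor from SingleObj H to the structured arrow category -/
def eFun (Hs : OrbitCat G F) : SingleObj ↥Hs.H ⥤ StructuredArrow (Opposite.op Hs) (iFunctor G F hF) where
  obj _ := StructuredArrow.mk (Y := SingleObj.star G)
    (Quiver.Hom.op (show ((⟨⊥, hF⟩ : OrbitCat G F) ⟶ Hs) from proj0 G Hs.H))
  map {_ _} (h : ↥Hs.H) := StructuredArrow.homMk ((h : G) : SingleObj.star G ⟶ SingleObj.star G) (by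
    apply Quiver.Hom.unop_inj
    apply MulActionHom.ext
    intro x
    induction x using QuotientGroup.induction_on with
    | H z =>
      show ((z * (h:G) : G) : G ⧸ Hs.H) = ((z : G) : G ⧸ Hs.H)
      rw [QuotientGroup.eq]
      simpa using h.2)
  map_id _ := by
    apply StructuredArrow.hom_ext
    rfl
  map_comp _ _ := by
    apply StructuredArrow.hom_ext
    rfl

instance (Hs : OrbitCat G F) : (eFun hF Hs).Faithful where
  map_injective := by
    intro X Y h h' e
    exact Subtype.ext (congrArg CommaMorphism.right e)

instance (Hs : OrbitCat G F) : (eFun hF Hs).Full where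
  map_surjective := by
    intro X Y t
    let g : G := t.right
    have hg : (g : G) ∈ Hs.H := by
      have w3 : (proj0 G Hs.H).comp (orbRightMul G g) = proj0 G Hs.H :=
        congrArg Quiver.Hom.unop (StructuredArrow.w t)
      have := DFunLike.congr_fun w3 ((1:G) : G ⧸ (⊥ : Subgroup G))
      have h4 : ((1 * g : G) : G ⧸ Hs.H) = ((1 : G) : G ⧸ Hs.H) := this
      rw [one_mul] at h4
      simpa using (QuotientGroup.eq.mp h4.symm)
    exact ⟨⟨g, hg⟩, StructuredArrow.hom_ext _ _ rfl⟩

instance (Hs : OrbitCat G F) : (eFun hF Hs).EssSurj where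
  mem_essImage := by
    intro S
    let φ : (G ⧸ (⊥:Subgroup G)) →[G] G ⧸ Hs.H := S.hom.unop
    obtain ⟨a, ha⟩ := QuotientGroup.mk_surjective (φ ((1:G) : G ⧸ (⊥ : Subgroup G)))
    refine ⟨SingleObj.star ↥Hs.H, ⟨StructuredArrow.isoMk ?_ ?_⟩⟩
    · exact { hom := (a : SingleObj.star G ⟶ SingleObj.star G)
              inv := (a⁻¹ : G)
              hom_inv_id := by show a⁻¹ * a = 1; simp
              inv_hom_id := by show a * a⁻¹ = 1; simp }
    · apply Quiver.Hom.unop_inj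
      show (proj0 G Hs.H).comp (orbRightMul G a) = φ
      apply MulActionHom.ext
      intro x
      induction x using QuotientGroup.induction_on with
      | H z =>
        have h1 : φ ((z:G) : G ⧸ (⊥:Subgroup G)) = z • φ ((1:G) : G ⧸ (⊥:Subgroup G)) := by
          have := φ.map_smul z ((1:G) : G ⧸ (⊥:Subgroup G))
          have h0 : (z • ((1:G) : G ⧸ (⊥:Subgroup G))) = ((z:G) : G ⧸ (⊥:Subgroup G)) := by
            show (((z*1 : G)) : G ⧸ (⊥:Subgroup G)) = _
            rw [mul_one]
          rw [h0] at this
          exact this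
        show ((z * a : G) : G ⧸ Hs.H) = φ ((z:G) : G ⧸ (⊥:Subgroup G))
        rw [h1, ← ha]
        rfl

instance (Hs : OrbitCat G F) : (eFun hF Hs).IsEquivalence := {}

example (Hs : OrbitCat G F) : (eFun hF Hs).Initial := inferInstance

/-- precomposition along `i : G → O_F^op` has a fully faithful right
adjoint `i_*`, given on objects by `(i_* X)(G/H) = X^H`. -/
theorem stmt16 :
    ∃ (istar : ((OrbitCat G F)ᵒᵖ ⥤ C) ⥤ (SingleObj G ⥤ C)),
      istar = (Functor.whiskeringLeft (SingleObj G) (OrbitCat G F)ᵒᵖ C).obj (iFunctor G F hF) ∧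
      ∃ (R : (SingleObj G ⥤ C) ⥤ ((OrbitCat G F)ᵒᵖ ⥤ C)) (_ : istar ⊣ R),
        Nonempty R.FullyFaithful ∧
        ∀ (X : SingleObj G ⥤ C) (Hs : OrbitCat G F),
          Nonempty ((R.obj X).obj (Opposite.op Hs) ≅ (fixPt G C Hs.H).obj X) := by
  haveI h1 : ∀ (X : SingleObj G ⥤ C), (iFunctor G F hF).HasPointwiseRightKanExtension X := by
    intro X Y
    infer_instance
  haveI h2 : HasLimitsOfSize.{u, 0} C := hasLimitsOfSizeShrink.{u, 0, 0, u} C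
  refine ⟨(Functor.whiskeringLeft (SingleObj G) (OrbitCat G F)ᵒᵖ C).obj (iFunctor G F hF), rfl,
    (iFunctor G F hF).ran, (iFunctor G F hF).ranAdjunction C,
    ⟨((iFunctor G F hF).ranAdjunction C).fullyFaithfulROfIsIsoCounit⟩, ?_⟩
  intro X Hs
  refine ⟨(iFunctor G F hF).ranObjObjIsoLimit X (Opposite.op Hs) ≪≫
    (Functor.Initial.limitIso (eFun hF Hs)
      (StructuredArrow.proj (Opposite.op Hs) (iFunctor G F hF) ⋙ X)).symm ≪≫ ?_⟩
  exact Iso.refl _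
end
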